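/- Let Σ ∈ ℝ^{p×p} be symmetric positive semidefinite with unit diagonal, let S ⊆ {1,…,p} be nonempty with S ≠ {1,…,p}, set s = |S|, and let λ_s > 0 be such that λ_s² is the smallest eigenvalue of Σ_{SS}. If λ_s ≤ δ'/(√s·(R+1)) for some δ' > 0 and R ≥ 1, then Σ ∉ MRI_S(δ'; R). -/
import Mathlib


open Matrix BigOperators

noncomputable section

/-- MR incoherence condition `Σ ∈ MRI_S(δ'; R)`. -/
def MRI {p : ℕ} (Sig : Matrix (Fin p) (Fin p) ℝ) (S : Finset (Fin p)) (δ' R : ℝ) : Prop :=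
  ∀ j ∈ S, ∀ k ∉ S,
    (R / (1 + R)) * (∑ j' ∈ S, |Sig j' j + Sig j' k|) + δ' / (1 + R) < Sig j j + Sig j k ∧
    (R / (1 + R)) * (∑ j' ∈ S, |Sig j' j - Sig j' k|) + δ' / (1 + R) < Sig j j - Sig j k

/-- Proposition: if the square root `λ_s` of the smallest eigenvalue of `Σ_{SS}` satisfies
`λ_s ≤ δ'/(√s (R+1))`, then `Σ ∉ MRI_S(δ'; R)`. -/
theorem not_mri_of_small_eigenvalue {p : ℕ} (Sig : Matrix (Fin p) (Fin p) ℝ)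
    (S : Finset (Fin p)) (hSym : Sig.IsSymm) (hPSD : Sig.PosSemidef)
    (hdiag : ∀ i, Sig i i = 1) (hS : S.Nonempty) (hne : S ≠ Finset.univ)
    (lam : ℝ) (hlam : 0 < lam)
    (hmin : IsLeast {μ : ℝ | ∃ v : {x // x ∈ S} → ℝ, v ≠ 0 ∧
        (Sig.submatrix (fun a : {x // x ∈ S} => (a : Fin p))
          (fun a : {x // x ∈ S} => (a : Fin p))).mulVec v = μ • v} (lam ^ 2))
    (δ' R : ℝ) (hδ' : 0 < δ') (hR : 1 ≤ R)
    (hsmall : lam ≤ δ' / (Real.sqrt S.card * (R + 1))) :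
    ¬ MRI Sig S δ' R := by
  intro hmri
  obtain ⟨k, hk⟩ : ∃ k, k ∉ S := by
    by_contra h
    push_neg at h
    exact hne (Finset.eq_univ_iff_forall.mpr h)
  have hRpos : (0:ℝ) < R := lt_of_lt_of_le one_pos hR
  have h1R : (0:ℝ) < 1 + R := by linarith
  -- Key: off-diagonal absolute row sums of `Σ_SS` are `< (1-δ')/R`
  have key : ∀ j ∈ S, ∑ j' ∈ S.erase j, |Sig j' j| < (1 - δ') / R := by
    intro j hj
    obtain ⟨h1, h2⟩ := hmri j hj k hk
    set u := ∑ j' ∈ S, |Sig j' j + Sig j' k| with hu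
    set w := ∑ j' ∈ S, |Sig j' j - Sig j' k| with hw
    set E := ∑ j' ∈ S.erase j, |Sig j' j| with hEdef
    have hsum : 2 * ∑ j' ∈ S, |Sig j' j| ≤ u + w := by
      rw [hu, hw, ← Finset.sum_add_distrib, Finset.mul_sum]
      apply Finset.sum_le_sum
      intro j' _
      have h2a : |2 * Sig j' j| ≤ |Sig j' j + Sig j' k| + |Sig j' j - Sig j' k| :=
        calc |2 * Sig j' j| = |(Sig j' j + Sig j' k) + (Sig j' j - Sig j' k)| := by ring_nf
          _ ≤ _ := abs_add_le _ _
      calc 2 * |Sig j' j| = |2 * Sig j' j| := by rw [abs_mul]; norm_num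
        _ ≤ _ := h2a
    have hE : ∑ j' ∈ S, |Sig j' j| = 1 + E := by
      rw [hEdef, ← Finset.add_sum_erase S _ hj, hdiag, abs_one]
    have e1 : ((R/(1+R))*u + δ'/(1+R)) * (1+R) = R*u + δ' := by field_simp
    have e2 : ((R/(1+R))*w + δ'/(1+R)) * (1+R) = R*w + δ' := by field_simp
    have h1' : R*u + δ' < (Sig j j + Sig j k) * (1+R) :=
      e1 ▸ mul_lt_mul_of_pos_right h1 h1R
    have h2' : R*w + δ' < (Sig j j - Sig j k) * (1+R) :=
      e2 ▸ mul_lt_mul_of_pos_right h2 h1R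
    have hjj : Sig j j = 1 := hdiag j
    have hRE : R * (2 * (1 + E)) ≤ R * (u + w) := by
      apply mul_le_mul_of_nonneg_left _ (le_of_lt hRpos)
      rw [← hE]; exact hsum
    have hER : E * R < 1 - δ' := by nlinarith
    exact (lt_div_iff₀ hRpos).mpr hER
  -- Gershgorin-type bound using the eigenvector of `lam ^ 2`
  obtain ⟨v, hv0, hveq⟩ := hmin.1
  haveI : Nonempty {x // x ∈ S} := ⟨⟨hS.choose, hS.choose_spec⟩⟩
  obtain ⟨j₀, -, hj₀⟩ := Finset.exists_max_image (Finset.univ : Finset {x // x ∈ S})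
    (fun a => |v a|) Finset.univ_nonempty
  have hvpos : 0 < |v j₀| := by
    obtain ⟨a, ha⟩ := Function.ne_iff.mp hv0
    exact lt_of_lt_of_le (abs_pos.mpr ha) (hj₀ a (Finset.mem_univ a))
  have heq := congrFun hveq j₀
  simp only [Matrix.mulVec, dotProduct, Matrix.submatrix_apply, Pi.smul_apply,
    smul_eq_mul] at heq
  have hsplit : Sig ↑j₀ ↑j₀ * v j₀ +
      ∑ j' ∈ Finset.univ.erase j₀, Sig ↑j₀ ↑j' * v j' = lam ^ 2 * v j₀ := by
    rw [Finset.add_sum_erase (Finset.univ : Finset {x // x ∈ S}) (fun j' : {x // x ∈ S} => Sig ↑j₀ ↑j' * v j') (Finset.mem_univ j₀)]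
    exact heq
  set E₀ := ∑ j' ∈ Finset.univ.erase j₀, |Sig (↑j₀ : Fin p) ↑j'| with hE₀def
  have habs : |lam ^ 2 - 1| * |v j₀| ≤ E₀ * |v j₀| := by
    have hv : (lam ^ 2 - 1) * v j₀ = ∑ j' ∈ Finset.univ.erase j₀, Sig ↑j₀ ↑j' * v j' := by
      have hd : Sig (↑j₀ : Fin p) ↑j₀ = 1 := hdiag _
      rw [hd, one_mul] at hsplit
      linear_combination -hsplit
    calc |lam ^ 2 - 1| * |v j₀| = |(lam ^ 2 - 1) * v j₀| := (abs_mul _ _).symm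
      _ = |∑ j' ∈ Finset.univ.erase j₀, Sig ↑j₀ ↑j' * v j'| := by rw [hv]
      _ ≤ ∑ j' ∈ Finset.univ.erase j₀, |Sig (↑j₀ : Fin p) ↑j' * v j'| :=
          Finset.abs_sum_le_sum_abs _ _
      _ ≤ ∑ j' ∈ Finset.univ.erase j₀, |Sig (↑j₀ : Fin p) ↑j'| * |v j₀| := by
          apply Finset.sum_le_sum
          intro j' _
          rw [abs_mul]
          exact mul_le_mul_of_nonneg_left (hj₀ j' (Finset.mem_univ j')) (abs_nonneg _)
      _ = E₀ * |v j₀| := by rw [hE₀def, Finset.sum_mul]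
  have hgersh : |lam ^ 2 - 1| ≤ E₀ := le_of_mul_le_mul_right habs hvpos
  have hE₀eq : E₀ = ∑ j' ∈ S.erase ↑j₀, |Sig j' ↑j₀| := by
    have h1 : E₀ + |Sig (↑j₀ : Fin p) ↑j₀| = ∑ j' : {x // x ∈ S}, |Sig (↑j₀ : Fin p) ↑j'| :=
      Finset.sum_erase_add _ _ (Finset.mem_univ j₀)
    have h2 : ∑ j' : {x // x ∈ S}, |Sig (↑j₀ : Fin p) ↑j'|
        = ∑ j' ∈ S, |Sig (↑j₀ : Fin p) j'| :=
      Finset.sum_coe_sort S (fun j' => |Sig (↑j₀ : Fin p) j'|)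
    have h3 : ∑ j' ∈ S, |Sig (↑j₀ : Fin p) j'|
        = |Sig (↑j₀ : Fin p) ↑j₀| + ∑ j' ∈ S.erase ↑j₀, |Sig (↑j₀ : Fin p) j'| :=
      (Finset.add_sum_erase S _ j₀.2).symm
    have h4 : ∑ j' ∈ S.erase ↑j₀, |Sig (↑j₀ : Fin p) j'|
        = ∑ j' ∈ S.erase ↑j₀, |Sig j' ↑j₀| := by
      apply Finset.sum_congr rfl
      intro j' _
      rw [hSym.apply]
    linarith [h1, h2, h3, h4]
  have hE₀lt : E₀ < (1 - δ') / R := hE₀eq ▸ key ↑j₀ j₀.2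
  have hE₀nn : (0:ℝ) ≤ E₀ := Finset.sum_nonneg fun _ _ => abs_nonneg _
  have hδ1 : δ' < 1 := by
    have h0 : 0 < (1 - δ') / R := lt_of_le_of_lt hE₀nn hE₀lt
    have := mul_pos h0 hRpos
    rw [div_mul_cancel₀ _ (ne_of_gt hRpos)] at this
    linarith
  have hdle : (1 - δ') / R ≤ 1 - δ' := div_le_self (by linarith) hR
  have hlam2 : δ' < lam ^ 2 := by
    have : |lam ^ 2 - 1| < 1 - δ' := lt_of_le_of_lt hgersh (lt_of_lt_of_le hE₀lt hdle)
    have := abs_lt.mp this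
    linarith [this.1]
  -- But `lam ≤ δ'/2` so `lam ^ 2 < δ'`
  have hs1 : (1:ℝ) ≤ Real.sqrt S.card := by
    rw [show (1:ℝ) = Real.sqrt 1 by simp]
    apply Real.sqrt_le_sqrt
    exact_mod_cast hS.card_pos
  have h2le : (2:ℝ) ≤ Real.sqrt S.card * (R + 1) := by nlinarith
  have hd2 : δ' / (Real.sqrt S.card * (R + 1)) ≤ δ' / 2 := by
    apply div_le_div_of_nonneg_left (le_of_lt hδ') two_pos h2le
  have hlamhalf : lam ≤ δ' / 2 := le_trans hsmall hd2
  nlinarith [hlam2, hlamhalf, hlam, hδ', hδ1]
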